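/- Let F be a real n×n matrix with F + Fᵀ ⪰ 0 (no constraints active: Π = 0). Then every eigenvalue λ of the generalized eigenproblem (FFᵀ + I)x = λ(F + I)(F + I)ᵀx satisfies 1/2 ≤ λ ≤ 1. -/

import Mathlib

open Matrix

private lemma quad_nonneg {n : ℕ} (M : Matrix (Fin n) (Fin n) ℝ) (x : Fin n → ℝ) :
    0 ≤ x ⬝ᵥ (M * Mᵀ) *ᵥ x := by
  rw [← Matrix.mulVec_mulVec, Matrix.dotProduct_mulVec, ← Matrix.mulVec_transpose]
  exact Finset.sum_nonneg fun i _ => mul_self_nonneg _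

theorem stmt9 {n : ℕ} (F : Matrix (Fin n) (Fin n) ℝ)
    (hF : (F + Fᵀ).PosSemidef) :
    ∀ (lam : ℝ) (x : Fin n → ℝ), x ≠ 0 →
      (F * Fᵀ + 1).mulVec x = lam • ((F + 1) * (F + 1)ᵀ).mulVec x →
      1 / 2 ≤ lam ∧ lam ≤ 1 := by
  intro lam x hx heq
  -- quadratic forms
  set q : Matrix (Fin n) (Fin n) ℝ → ℝ := fun M => x ⬝ᵥ M *ᵥ x with hq
  have hqadd : ∀ A B, q (A + B) = q A + q B := by
    intro A B; simp [hq, Matrix.add_mulVec, dotProduct_add]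
  have key : q (F * Fᵀ + 1) = lam * q ((F + 1) * (F + 1)ᵀ) := by
    simp only [hq]
    rw [heq, dotProduct_smul, smul_eq_mul]
  have ht : 0 < q 1 := by
    have : q 1 = x ⬝ᵥ x := by simp [hq]
    rw [this]
    have h0 : x ⬝ᵥ x ≠ 0 := fun h => hx (dotProduct_self_eq_zero.1 h)
    have h1 : 0 ≤ x ⬝ᵥ x := Finset.sum_nonneg fun i _ => mul_self_nonneg _
    exact lt_of_le_of_ne h1 (Ne.symm h0)
  have ha1 : 0 ≤ q (F * Fᵀ) := quad_nonneg F x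
  have hs : 0 ≤ q (F + Fᵀ) := by simpa [star_trivial] using hF.dotProduct_mulVec_nonneg x
  have hd : 0 ≤ q ((F - 1) * (F - 1)ᵀ) := quad_nonneg (F - 1) x
  -- expansions
  have e1 : (F + 1) * (F + 1)ᵀ = (F * Fᵀ + 1) + (F + Fᵀ) := by
    simp only [Matrix.transpose_add, Matrix.transpose_one]
    noncomm_ring
  have e2 : (F - 1) * (F - 1)ᵀ = (F * Fᵀ + 1) - (F + Fᵀ) := by
    simp only [Matrix.transpose_sub, Matrix.transpose_one]
    noncomm_ring
  have hqa : q (F * Fᵀ + 1) = q (F * Fᵀ) + q 1 := hqadd _ _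
  set a := q (F * Fᵀ + 1) with hadef
  set s := q (F + Fᵀ) with hsdef
  have hapos : 0 < a := by linarith [hqa]
  have hb : q ((F + 1) * (F + 1)ᵀ) = a + s := by rw [e1, hqadd]
  have hdval : q ((F - 1) * (F - 1)ᵀ) = a - s := by
    have : (F * Fᵀ + 1) = ((F - 1) * (F - 1)ᵀ) + (F + Fᵀ) := by rw [e2]; abel
    rw [hadef, this, hqadd]; ring
  have hsa : s ≤ a := by linarith [hd, hdval ▸ hd]
  have key' : a = lam * (a + s) := by rw [hb] at key; exact key
  have hbpos : 0 < a + s := by linarith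
  constructor
  · rw [ge_iff_le.symm] at *
    nlinarith
  · nlinarith
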